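/- Let c > 1/2, C* > 0, and t* ≥ 1. There exists a time-independent constant K > 0 such that for all t ≥ t*, the quantity I₈(t) := t^{−4c} · ∫_{u=t*}^{t} ∫_{s=u}^{t} ∫_{w=s}^{t} ∫_{r=w}^{t} r^{c−2} · u^{c−1} · w^{c−2} · s^{c−2} · e^{−C* r + C* u} dr dw ds du satisfies: I₈(t) ≤ K/t⁶ if c > 3/2; I₈(t) ≤ K(1 + log t)/t⁶ if c = 3/2; and I₈(t) ≤ K/t^{4c} if 1/2 < c < 3/2. -/

import Mathlib

open MeasureTheory Set intervalIntegral

/-- The quantity `I₈(t)` from Lemma 5.6: a fourfold iterated integral over the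
ordered region `t* ≤ u ≤ s ≤ w ≤ r ≤ t`, scaled by `t^{-4c}`. -/
noncomputable def I8 (c Cstar tstar t : ℝ) : ℝ :=
  t ^ (-(4 * c)) *
    ∫ u in tstar..t, ∫ s in u..t, ∫ w in s..t, ∫ r in w..t,
      r ^ (c - 2) * u ^ (c - 1) * w ^ (c - 2) * s ^ (c - 2) *
        Real.exp (-Cstar * r + Cstar * u)

/- ### Auxiliary integral estimates -/

lemma expInt {C : ℝ} (hC : 0 < C) (a b : ℝ) :
    ∫ x in a..b, Real.exp (-C * x) = (Real.exp (-C*a) - Real.exp (-C*b)) / C := by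
  have h : ∀ x ∈ Set.uIcc a b,
      HasDerivAt (fun y => -Real.exp (-C*y)/C) (Real.exp (-C*x)) x := by
    intro x _
    have h1 : HasDerivAt (fun y : ℝ => -C * y) (-C) x := by
      simpa using (hasDerivAt_id x).const_mul (-C)
    have h2 : HasDerivAt (fun y => -Real.exp (-C*y)/C) (-(Real.exp (-C * x) * -C) / C) x :=
      (h1.exp).neg.div_const C
    convert h2 using 1
    rw [neg_mul_eq_mul_neg, neg_neg, mul_div_assoc, div_self hC.ne', mul_one]
  rw [intervalIntegral.integral_eq_sub_of_hasDerivAt h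
    ((Real.continuous_exp.comp (continuous_const.mul continuous_id)).intervalIntegrable a b)]
  ring

lemma expIntLe {C : ℝ} (hC : 0 < C) {a b : ℝ} (hab : a ≤ b) :
    ∫ x in a..b, Real.exp (-C * x) ≤ Real.exp (-C*a) / C := by
  rw [expInt hC]
  have := (Real.exp_pos (-C*b)).le
  gcongr
  linarith

lemma contOn_rpow' (d : ℝ) {t : ℝ} :
    ContinuousOn (fun x : ℝ => x ^ d) (Icc 1 t) :=
  ContinuousOn.rpow_const continuousOn_id
    (fun x hx => Or.inl (ne_of_gt (lt_of_lt_of_le one_pos hx.1)))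

lemma expC_int (C a b : ℝ) :
    IntervalIntegrable (fun x => Real.exp (-C * x)) volume a b :=
  (Real.continuous_exp.comp (continuous_const.mul continuous_id)).intervalIntegrable a b

lemma keyIntegrable (C d a b : ℝ) (ha : 0 < a) (hab : a ≤ b) :
    IntervalIntegrable (fun x => x ^ d * Real.exp (-C * x)) volume a b := by
  apply ContinuousOn.intervalIntegrable
  apply ContinuousOn.mul
  · apply ContinuousOn.rpow_const continuousOn_id
    intro x hx
    rw [Set.uIcc_of_le hab] at hx
    exact Or.inl (ne_of_gt (lt_of_lt_of_le ha hx.1))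
  · exact (Real.continuous_exp.comp (continuous_const.mul continuous_id)).continuousOn

lemma keyInt {C a b d : ℝ} (hC : 0 < C) (ha : 1 ≤ a) (hab : a ≤ b) (hd : d ≤ 0) :
    ∫ x in a..b, x ^ d * Real.exp (-C * x) ≤ a ^ d * Real.exp (-C * a) / C := by
  have ha0 : (0:ℝ) < a := lt_of_lt_of_le one_pos ha
  have h1 : ∫ x in a..b, x ^ d * Real.exp (-C*x)
      ≤ ∫ x in a..b, a ^ d * Real.exp (-C*x) := by
    apply intervalIntegral.integral_mono_on hab (keyIntegrable C d a b ha0 hab)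
      ((expC_int C a b).const_mul _)
    intro x hx
    exact mul_le_mul_of_nonneg_right (Real.rpow_le_rpow_of_nonpos ha0 hx.1 hd)
      (Real.exp_pos _).le
  rw [intervalIntegral.integral_const_mul] at h1
  calc ∫ x in a..b, x ^ d * Real.exp (-C*x)
      ≤ a ^ d * ∫ x in a..b, Real.exp (-C*x) := h1
    _ ≤ a ^ d * (Real.exp (-C*a) / C) :=
        mul_le_mul_of_nonneg_left (expIntLe hC hab) (Real.rpow_nonneg ha0.le _)
    _ = a ^ d * Real.exp (-C*a) / C := by ring

/- ### The nested integrals -/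

noncomputable def phiF (c C t w : ℝ) : ℝ := ∫ r in w..t, r ^ (c-2) * Real.exp (-C*r)
noncomputable def psiF (c C t s : ℝ) : ℝ := ∫ w in s..t, w ^ (c-2) * phiF c C t w
noncomputable def chiF (c C t u : ℝ) : ℝ := ∫ s in u..t, s ^ (c-2) * psiF c C t s

lemma I8_eq (c C tstar t : ℝ) :
    I8 c C tstar t = t ^ (-(4*c)) *
      ∫ u in tstar..t, u ^ (c-1) * Real.exp (C*u) * chiF c C t u := by
  have h_r : ∀ u s w : ℝ,
      (∫ r in w..t, r ^ (c-2) * u ^ (c-1) * w ^ (c-2) * s ^ (c-2)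
          * Real.exp (-C*r + C*u))
      = (u ^ (c-1) * Real.exp (C*u) * s ^ (c-2) * w ^ (c-2)) * phiF c C t w := by
    intro u s w
    unfold phiF
    rw [← intervalIntegral.integral_const_mul]
    refine intervalIntegral.integral_congr fun r _ => ?_
    rw [Real.exp_add]
    ring
  have h_w : ∀ u s : ℝ,
      (∫ w in s..t, ∫ r in w..t, r ^ (c-2) * u ^ (c-1) * w ^ (c-2) * s ^ (c-2)
          * Real.exp (-C*r + C*u))
      = (u ^ (c-1) * Real.exp (C*u) * s ^ (c-2)) * psiF c C t s := by
    intro u s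
    unfold psiF
    rw [← intervalIntegral.integral_const_mul]
    refine intervalIntegral.integral_congr fun w _ => ?_
    rw [h_r u s w]
    ring
  have h_s : ∀ u : ℝ,
      (∫ s in u..t, ∫ w in s..t, ∫ r in w..t, r ^ (c-2) * u ^ (c-1) * w ^ (c-2) * s ^ (c-2)
          * Real.exp (-C*r + C*u))
      = (u ^ (c-1) * Real.exp (C*u)) * chiF c C t u := by
    intro u
    unfold chiF
    rw [← intervalIntegral.integral_const_mul]
    refine intervalIntegral.integral_congr fun s _ => ?_
    rw [h_w u s]
    ring
  unfold I8
  congr 1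
  refine intervalIntegral.integral_congr fun u _ => ?_
  rw [h_s u]

/- ### Continuity -/

lemma prim_contOn {t : ℝ} (h1t : (1:ℝ) ≤ t) {f : ℝ → ℝ}
    (hf : ContinuousOn f (Icc 1 t)) :
    ContinuousOn (fun x => ∫ y in x..t, f y) (Icc 1 t) := by
  have hint : IntegrableOn f (uIcc 1 t) volume := by
    rw [Set.uIcc_of_le h1t]; exact hf.integrableOn_Icc
  have := intervalIntegral.continuousOn_primitive_interval_left hint
  rwa [Set.uIcc_of_le h1t] at this

lemma phiF_contOn {c C t : ℝ} (h1t : (1:ℝ) ≤ t) :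
    ContinuousOn (phiF c C t) (Icc 1 t) :=
  prim_contOn h1t ((contOn_rpow' (c-2)).mul
    (Real.continuous_exp.comp (continuous_const.mul continuous_id)).continuousOn)

lemma psiF_contOn {c C t : ℝ} (h1t : (1:ℝ) ≤ t) :
    ContinuousOn (psiF c C t) (Icc 1 t) :=
  prim_contOn h1t ((contOn_rpow' (c-2)).mul (phiF_contOn h1t))

lemma chiF_contOn {c C t : ℝ} (h1t : (1:ℝ) ≤ t) :
    ContinuousOn (chiF c C t) (Icc 1 t) :=
  prim_contOn h1t ((contOn_rpow' (c-2)).mul (psiF_contOn h1t))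

lemma sub_Icc {a t : ℝ} (ha : 1 ≤ a) (hat : a ≤ t) : uIcc a t ⊆ Icc 1 t := by
  rw [Set.uIcc_of_le hat]; exact Icc_subset_Icc ha le_rfl

/- ### Nonnegativity -/

lemma phiF_nonneg {c C t w : ℝ} (hw : 0 ≤ w) (hwt : w ≤ t) : 0 ≤ phiF c C t w :=
  intervalIntegral.integral_nonneg hwt (fun r hr =>
    mul_nonneg (Real.rpow_nonneg (le_trans hw hr.1) _) (Real.exp_pos _).le)

lemma psiF_nonneg {c C t s : ℝ} (hs : 0 ≤ s) (hst : s ≤ t) : 0 ≤ psiF c C t s :=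
  intervalIntegral.integral_nonneg hst (fun w hw =>
    mul_nonneg (Real.rpow_nonneg (le_trans hs hw.1) _)
      (phiF_nonneg (le_trans hs hw.1) hw.2))

lemma chiF_nonneg {c C t u : ℝ} (hu : 0 ≤ u) (hut : u ≤ t) : 0 ≤ chiF c C t u :=
  intervalIntegral.integral_nonneg hut (fun s hs =>
    mul_nonneg (Real.rpow_nonneg (le_trans hu hs.1) _)
      (psiF_nonneg (le_trans hu hs.1) hs.2))

/- ### The chain of bounds, case `c ≤ 2` -/

lemma phiF_leL {c C t w : ℝ} (hC : 0 < C) (hc : c ≤ 2) (hw : 1 ≤ w) (hwt : w ≤ t) :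
    phiF c C t w ≤ w ^ (c-2) * Real.exp (-C*w) / C :=
  keyInt hC hw hwt (by linarith)

lemma psiF_leL {c C t s : ℝ} (hC : 0 < C) (hc : c ≤ 2) (hs : 1 ≤ s) (hst : s ≤ t) :
    psiF c C t s ≤ s ^ (2*c-4) * Real.exp (-C*s) / C^2 := by
  have h1t : (1:ℝ) ≤ t := le_trans hs hst
  have step1 : psiF c C t s ≤ ∫ w in s..t, w ^ (2*c-4) * Real.exp (-C*w) / C := by
    apply intervalIntegral.integral_mono_on hst
      (((contOn_rpow' (c-2)).mul (phiF_contOn h1t)).mono (sub_Icc hs hst)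
        |>.intervalIntegrable)
      ((keyIntegrable C (2*c-4) s t (lt_of_lt_of_le one_pos hs) hst).div_const C)
    intro w hw
    have hw1 : (1:ℝ) ≤ w := le_trans hs hw.1
    have h0 : (0:ℝ) < w := lt_of_lt_of_le one_pos hw1
    calc w ^ (c-2) * phiF c C t w
        ≤ w ^ (c-2) * (w ^ (c-2) * Real.exp (-C*w)/C) :=
          mul_le_mul_of_nonneg_left (phiF_leL hC hc hw1 hw.2)
            (Real.rpow_nonneg h0.le (c-2))
      _ = w ^ (c-2) * w ^ (c-2) * Real.exp (-C*w)/C := by ring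
      _ = w ^ (2*c-4) * Real.exp (-C*w)/C := by
          rw [← Real.rpow_add h0, show (c-2)+(c-2) = 2*c-4 by ring]
  calc psiF c C t s ≤ ∫ w in s..t, w ^ (2*c-4) * Real.exp (-C*w) / C := step1
    _ = (∫ w in s..t, w ^ (2*c-4) * Real.exp (-C*w)) / C := intervalIntegral.integral_div _ _
    _ ≤ (s ^ (2*c-4) * Real.exp (-C*s)/C)/C := by
        gcongr
        exact keyInt hC hs hst (by linarith)
    _ = s ^ (2*c-4) * Real.exp (-C*s) / C^2 := by ring

lemma chiF_leL {c C t u : ℝ} (hC : 0 < C) (hc : c ≤ 2) (hu : 1 ≤ u) (hut : u ≤ t) :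
    chiF c C t u ≤ u ^ (3*c-6) * Real.exp (-C*u) / C^3 := by
  have h1t : (1:ℝ) ≤ t := le_trans hu hut
  have step1 : chiF c C t u ≤ ∫ s in u..t, s ^ (3*c-6) * Real.exp (-C*s) / C^2 := by
    apply intervalIntegral.integral_mono_on hut
      (((contOn_rpow' (c-2)).mul (psiF_contOn h1t)).mono (sub_Icc hu hut)
        |>.intervalIntegrable)
      ((keyIntegrable C (3*c-6) u t (lt_of_lt_of_le one_pos hu) hut).div_const (C^2))
    intro s hs
    have hs1 : (1:ℝ) ≤ s := le_trans hu hs.1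
    have h0 : (0:ℝ) < s := lt_of_lt_of_le one_pos hs1
    calc s ^ (c-2) * psiF c C t s
        ≤ s ^ (c-2) * (s ^ (2*c-4) * Real.exp (-C*s)/C^2) :=
          mul_le_mul_of_nonneg_left (psiF_leL hC hc hs1 hs.2)
            (Real.rpow_nonneg h0.le (c-2))
      _ = s ^ (c-2) * s ^ (2*c-4) * Real.exp (-C*s)/C^2 := by ring
      _ = s ^ (3*c-6) * Real.exp (-C*s)/C^2 := by
          rw [← Real.rpow_add h0, show (c-2)+(2*c-4) = 3*c-6 by ring]
  calc chiF c C t u ≤ ∫ s in u..t, s ^ (3*c-6) * Real.exp (-C*s) / C^2 := step1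
    _ = (∫ s in u..t, s ^ (3*c-6) * Real.exp (-C*s)) / C^2 := intervalIntegral.integral_div _ _
    _ ≤ (u ^ (3*c-6) * Real.exp (-C*u)/C)/C^2 := by
        gcongr
        exact keyInt hC hu hut (by linarith)
    _ = u ^ (3*c-6) * Real.exp (-C*u) / C^3 := by ring

lemma chainL {c C tstar t : ℝ} (hC : 0 < C) (h1 : 1 ≤ tstar) (ht : tstar ≤ t) (hc2 : c ≤ 2) :
    (∫ u in tstar..t, u ^ (c-1) * Real.exp (C*u) * chiF c C t u)
      ≤ (∫ u in tstar..t, u ^ (4*c-7)) / C^3 := by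
  have h1t : (1:ℝ) ≤ t := le_trans h1 ht
  have step1 : (∫ u in tstar..t, u ^ (c-1) * Real.exp (C*u) * chiF c C t u)
      ≤ ∫ u in tstar..t, u ^ (4*c-7) / C^3 := by
    apply intervalIntegral.integral_mono_on ht
      ((((contOn_rpow' (c-1)).mul
          (Real.continuous_exp.comp (continuous_const.mul continuous_id)).continuousOn).mul
        (chiF_contOn h1t)).mono (sub_Icc h1 ht) |>.intervalIntegrable)
      ((((contOn_rpow' (4*c-7)).mono (sub_Icc h1 ht)).div_const (C^3)).intervalIntegrable)
    intro u hu
    have hu1 : (1:ℝ) ≤ u := le_trans h1 hu.1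
    have h0 : (0:ℝ) < u := lt_of_lt_of_le one_pos hu1
    calc u ^ (c-1) * Real.exp (C*u) * chiF c C t u
        ≤ u ^ (c-1) * Real.exp (C*u) * (u ^ (3*c-6) * Real.exp (-C*u)/C^3) :=
          mul_le_mul_of_nonneg_left (chiF_leL hC hc2 hu1 hu.2)
            (mul_nonneg (Real.rpow_nonneg h0.le _) (Real.exp_pos _).le)
      _ = u ^ (c-1) * u ^ (3*c-6) * (Real.exp (C*u) * Real.exp (-C*u))/C^3 := by ring
      _ = u ^ (4*c-7) / C^3 := by
          rw [← Real.exp_add, show C*u + -C*u = 0 by ring, Real.exp_zero,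
            ← Real.rpow_add h0, show (c-1)+(3*c-6) = 4*c-7 by ring, mul_one]
  calc (∫ u in tstar..t, u ^ (c-1) * Real.exp (C*u) * chiF c C t u)
      ≤ ∫ u in tstar..t, u ^ (4*c-7) / C^3 := step1
    _ = (∫ u in tstar..t, u ^ (4*c-7)) / C^3 := intervalIntegral.integral_div _ _

/- ### The chain of bounds, case `2 ≤ c` -/

lemma phiF_leH {c C t w : ℝ} (hC : 0 < C) (hc : 2 ≤ c) (hw : 1 ≤ w) (hwt : w ≤ t) :
    phiF c C t w ≤ t ^ (c-2) * Real.exp (-C*w) / C := by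
  have h1t : (1:ℝ) ≤ t := le_trans hw hwt
  have ht0 : (0:ℝ) < t := lt_of_lt_of_le one_pos h1t
  have step1 : phiF c C t w ≤ ∫ r in w..t, t ^ (c-2) * Real.exp (-C*r) := by
    apply intervalIntegral.integral_mono_on hwt
      (keyIntegrable C (c-2) w t (lt_of_lt_of_le one_pos hw) hwt)
      ((expC_int C w t).const_mul _)
    intro r hr
    have hr0 : (0:ℝ) ≤ r := le_trans (le_trans zero_le_one hw) hr.1
    exact mul_le_mul_of_nonneg_right
      (Real.rpow_le_rpow hr0 hr.2 (by linarith)) (Real.exp_pos _).le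
  calc phiF c C t w ≤ ∫ r in w..t, t ^ (c-2) * Real.exp (-C*r) := step1
    _ = t ^ (c-2) * ∫ r in w..t, Real.exp (-C*r) := intervalIntegral.integral_const_mul _ _
    _ ≤ t ^ (c-2) * (Real.exp (-C*w)/C) :=
        mul_le_mul_of_nonneg_left (expIntLe hC hwt) (Real.rpow_nonneg ht0.le _)
    _ = t ^ (c-2) * Real.exp (-C*w) / C := by ring

lemma psiF_leH {c C t s : ℝ} (hC : 0 < C) (hc : 2 ≤ c) (hs : 1 ≤ s) (hst : s ≤ t) :
    psiF c C t s ≤ t ^ (2*c-4) * Real.exp (-C*s) / C^2 := by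
  have h1t : (1:ℝ) ≤ t := le_trans hs hst
  have ht0 : (0:ℝ) < t := lt_of_lt_of_le one_pos h1t
  have step1 : psiF c C t s ≤ ∫ w in s..t, (t ^ (2*c-4)/C) * Real.exp (-C*w) := by
    apply intervalIntegral.integral_mono_on hst
      (((contOn_rpow' (c-2)).mul (phiF_contOn h1t)).mono (sub_Icc hs hst)
        |>.intervalIntegrable)
      ((expC_int C s t).const_mul _)
    intro w hw
    have hw1 : (1:ℝ) ≤ w := le_trans hs hw.1
    have hw0 : (0:ℝ) ≤ w := le_trans zero_le_one hw1
    calc w ^ (c-2) * phiF c C t w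
        ≤ t ^ (c-2) * phiF c C t w :=
          mul_le_mul_of_nonneg_right (Real.rpow_le_rpow hw0 hw.2 (by linarith))
            (phiF_nonneg hw0 hw.2)
      _ ≤ t ^ (c-2) * (t ^ (c-2) * Real.exp (-C*w)/C) :=
          mul_le_mul_of_nonneg_left (phiF_leH hC hc hw1 hw.2) (Real.rpow_nonneg ht0.le _)
      _ = (t ^ (c-2) * t ^ (c-2) /C) * Real.exp (-C*w) := by ring
      _ = (t ^ (2*c-4)/C) * Real.exp (-C*w) := by
          rw [← Real.rpow_add ht0, show (c-2)+(c-2) = 2*c-4 by ring]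
  calc psiF c C t s ≤ ∫ w in s..t, (t ^ (2*c-4)/C) * Real.exp (-C*w) := step1
    _ = (t ^ (2*c-4)/C) * ∫ w in s..t, Real.exp (-C*w) := intervalIntegral.integral_const_mul _ _
    _ ≤ (t ^ (2*c-4)/C) * (Real.exp (-C*s)/C) := by
        apply mul_le_mul_of_nonneg_left (expIntLe hC hst)
        positivity
    _ = t ^ (2*c-4) * Real.exp (-C*s) / C^2 := by ring

lemma chiF_leH {c C t u : ℝ} (hC : 0 < C) (hc : 2 ≤ c) (hu : 1 ≤ u) (hut : u ≤ t) :
    chiF c C t u ≤ t ^ (3*c-6) * Real.exp (-C*u) / C^3 := by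
  have h1t : (1:ℝ) ≤ t := le_trans hu hut
  have ht0 : (0:ℝ) < t := lt_of_lt_of_le one_pos h1t
  have step1 : chiF c C t u ≤ ∫ s in u..t, (t ^ (3*c-6)/C^2) * Real.exp (-C*s) := by
    apply intervalIntegral.integral_mono_on hut
      (((contOn_rpow' (c-2)).mul (psiF_contOn h1t)).mono (sub_Icc hu hut)
        |>.intervalIntegrable)
      ((expC_int C u t).const_mul _)
    intro s hs
    have hs1 : (1:ℝ) ≤ s := le_trans hu hs.1
    have hs0 : (0:ℝ) ≤ s := le_trans zero_le_one hs1
    calc s ^ (c-2) * psiF c C t s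
        ≤ t ^ (c-2) * psiF c C t s :=
          mul_le_mul_of_nonneg_right (Real.rpow_le_rpow hs0 hs.2 (by linarith))
            (psiF_nonneg hs0 hs.2)
      _ ≤ t ^ (c-2) * (t ^ (2*c-4) * Real.exp (-C*s)/C^2) :=
          mul_le_mul_of_nonneg_left (psiF_leH hC hc hs1 hs.2) (Real.rpow_nonneg ht0.le _)
      _ = (t ^ (c-2) * t ^ (2*c-4) /C^2) * Real.exp (-C*s) := by ring
      _ = (t ^ (3*c-6)/C^2) * Real.exp (-C*s) := by
          rw [← Real.rpow_add ht0, show (c-2)+(2*c-4) = 3*c-6 by ring]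
  calc chiF c C t u ≤ ∫ s in u..t, (t ^ (3*c-6)/C^2) * Real.exp (-C*s) := step1
    _ = (t ^ (3*c-6)/C^2) * ∫ s in u..t, Real.exp (-C*s) := intervalIntegral.integral_const_mul _ _
    _ ≤ (t ^ (3*c-6)/C^2) * (Real.exp (-C*u)/C) := by
        apply mul_le_mul_of_nonneg_left (expIntLe hC hut)
        positivity
    _ = t ^ (3*c-6) * Real.exp (-C*u) / C^3 := by ring

lemma chainH {c C tstar t : ℝ} (hC : 0 < C) (h1 : 1 ≤ tstar) (ht : tstar ≤ t) (hc2 : 2 ≤ c) :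
    (∫ u in tstar..t, u ^ (c-1) * Real.exp (C*u) * chiF c C t u)
      ≤ t ^ (4*c-6) / C^3 := by
  have h1t : (1:ℝ) ≤ t := le_trans h1 ht
  have ht0 : (0:ℝ) < t := lt_of_lt_of_le one_pos h1t
  have step1 : (∫ u in tstar..t, u ^ (c-1) * Real.exp (C*u) * chiF c C t u)
      ≤ ∫ _u in tstar..t, t ^ (4*c-7) / C^3 := by
    apply intervalIntegral.integral_mono_on ht
      ((((contOn_rpow' (c-1)).mul
          (Real.continuous_exp.comp (continuous_const.mul continuous_id)).continuousOn).mul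
        (chiF_contOn h1t)).mono (sub_Icc h1 ht) |>.intervalIntegrable)
      (intervalIntegrable_const)
    intro u hu
    have hu1 : (1:ℝ) ≤ u := le_trans h1 hu.1
    have hu0 : (0:ℝ) ≤ u := le_trans zero_le_one hu1
    calc u ^ (c-1) * Real.exp (C*u) * chiF c C t u
        ≤ u ^ (c-1) * Real.exp (C*u) * (t ^ (3*c-6) * Real.exp (-C*u)/C^3) :=
          mul_le_mul_of_nonneg_left (chiF_leH hC hc2 hu1 hu.2)
            (mul_nonneg (Real.rpow_nonneg hu0 _) (Real.exp_pos _).le)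
      _ = u ^ (c-1) * (t ^ (3*c-6)/C^3) * (Real.exp (C*u) * Real.exp (-C*u)) := by ring
      _ = u ^ (c-1) * (t ^ (3*c-6)/C^3) := by
          rw [← Real.exp_add, show C*u + -C*u = 0 by ring, Real.exp_zero, mul_one]
      _ ≤ t ^ (c-1) * (t ^ (3*c-6)/C^3) := by
          apply mul_le_mul_of_nonneg_right (Real.rpow_le_rpow hu0 hu.2 (by linarith))
          positivity
      _ = t ^ (4*c-7) / C^3 := by
          rw [show t ^ (c-1) * (t ^ (3*c-6)/C^3) = t ^ (c-1) * t ^ (3*c-6)/C^3 by ring,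
            ← Real.rpow_add ht0, show (c-1)+(3*c-6) = 4*c-7 by ring]
  calc (∫ u in tstar..t, u ^ (c-1) * Real.exp (C*u) * chiF c C t u)
      ≤ ∫ _u in tstar..t, t ^ (4*c-7) / C^3 := step1
    _ = (t - tstar) * (t ^ (4*c-7) / C^3) := by
        rw [intervalIntegral.integral_const, smul_eq_mul]
    _ ≤ t * (t ^ (4*c-7) / C^3) := by
        apply mul_le_mul_of_nonneg_right (by linarith)
        positivity
    _ = t ^ (4*c-6) / C^3 := by
        rw [show t * (t ^ (4*c-7)/C^3) = t^(1:ℝ) * t ^ (4*c-7)/C^3 by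
            rw [Real.rpow_one]; ring,
          ← Real.rpow_add ht0, show (1:ℝ)+(4*c-7) = 4*c-6 by ring]

/- ### Conversion of powers -/

lemma tpow6 {t : ℝ} (ht0 : 0 < t) (c : ℝ) :
    t ^ (-(4*c)) * t ^ (4*c-6) = (t ^ 6)⁻¹ := by
  rw [← Real.rpow_add ht0, show -(4*c) + (4*c-6) = -(6:ℝ) by ring,
    Real.rpow_neg ht0.le, show ((6:ℝ)) = ((6:ℕ):ℝ) by norm_num, Real.rpow_natCast]

/-- Lemma 5.6 of the paper. -/
theorem stmt_4 (c Cstar tstar : ℝ) (hc : 1 / 2 < c) (hC : 0 < Cstar)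
    (htstar : 1 ≤ tstar) :
    ∃ K : ℝ, 0 < K ∧ ∀ t : ℝ, tstar ≤ t →
      (3 / 2 < c → I8 c Cstar tstar t ≤ K / t ^ 6) ∧
      (c = 3 / 2 → I8 c Cstar tstar t ≤ K * (1 + Real.log t) / t ^ 6) ∧
      (c < 3 / 2 → I8 c Cstar tstar t ≤ K / t ^ (4 * c)) := by
  have hC3 : (0:ℝ) < Cstar^3 := by positivity
  rcases lt_trichotomy c (3/2) with h32 | h32 | h32
  · -- case c < 3/2
    refine ⟨tstar ^ (4*c-6) / (6-4*c) / Cstar^3, ?_, ?_⟩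
    · have htp := Real.rpow_pos_of_pos (lt_of_lt_of_le one_pos htstar) (4*c-6)
      have h64 : (0:ℝ) < 6-4*c := by linarith
      exact div_pos (div_pos htp h64) hC3
    intro t ht
    have ht0 : (0:ℝ) < t := lt_of_lt_of_le one_pos (le_trans htstar ht)
    refine ⟨fun h => absurd h (by linarith), fun h => absurd h (by linarith), fun _ => ?_⟩
    rw [I8_eq]
    have hchain := chainL hC htstar ht (by linarith : c ≤ 2)
    have hrpow : (∫ u in tstar..t, u ^ (4*c-7))
        = (t ^ (4*c-6) - tstar ^ (4*c-6)) / (4*c-6) := by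
      rw [integral_rpow (Or.inr ⟨by intro hcon; linarith, ?_⟩)]
      · norm_num [show 4*c-7+1 = 4*c-6 by ring]
      · rw [Set.uIcc_of_le ht]
        intro hmem
        linarith [hmem.1, lt_of_lt_of_le one_pos htstar]
    have hint_le : (∫ u in tstar..t, u ^ (4*c-7)) ≤ tstar ^ (4*c-6) / (6-4*c) := by
      rw [hrpow]
      have htpos : (0:ℝ) ≤ t ^ (4*c-6) := (Real.rpow_pos_of_pos ht0 _).le
      have h64 : (0:ℝ) < 6-4*c := by linarith
      have heq : (t ^ (4*c-6) - tstar ^ (4*c-6)) / (4*c-6)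
          = (tstar ^ (4*c-6) - t ^ (4*c-6)) / (6-4*c) := by
        rw [div_eq_div_iff (by linarith : (4*c-6:ℝ) ≠ 0) h64.ne']
        ring
      rw [heq]
      gcongr
      linarith
    calc t ^ (-(4*c)) * ∫ u in tstar..t, u ^ (c-1) * Real.exp (Cstar*u) * chiF c Cstar t u
        ≤ t ^ (-(4*c)) * (tstar ^ (4*c-6) / (6-4*c) / Cstar^3) := by
          apply mul_le_mul_of_nonneg_left _ (Real.rpow_nonneg ht0.le _)
          calc (∫ u in tstar..t, u ^ (c-1) * Real.exp (Cstar*u) * chiF c Cstar t u)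
              ≤ (∫ u in tstar..t, u ^ (4*c-7)) / Cstar^3 := hchain
            _ ≤ tstar ^ (4*c-6) / (6-4*c) / Cstar^3 := by gcongr
      _ = tstar ^ (4*c-6) / (6-4*c) / Cstar^3 / t ^ (4*c) := by
          rw [Real.rpow_neg ht0.le]
          ring
  · -- case c = 3/2
    subst h32
    refine ⟨1/Cstar^3, by positivity, ?_⟩
    intro t ht
    have h1t : (1:ℝ) ≤ t := le_trans htstar ht
    have ht0 : (0:ℝ) < t := lt_of_lt_of_le one_pos h1t
    refine ⟨fun h => absurd h (by linarith), fun _ => ?_, fun h => absurd h (by linarith)⟩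
    rw [I8_eq]
    have hchain := chainL hC htstar ht (by norm_num : (3/2:ℝ) ≤ 2)
    have hrpow : (∫ u in tstar..t, u ^ (4*(3/2:ℝ)-7)) = Real.log (t/tstar) := by
      rw [show (4*(3/2:ℝ)-7) = -1 by norm_num]
      simp_rw [Real.rpow_neg_one]
      apply integral_inv
      rw [Set.uIcc_of_le ht]
      intro hmem
      linarith [hmem.1, lt_of_lt_of_le one_pos htstar]
    have hlog : Real.log (t/tstar) ≤ 1 + Real.log t := by
      have h1 : Real.log (t/tstar) ≤ Real.log t := by
        apply Real.log_le_log (by positivity)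
        exact div_le_self ht0.le htstar
      linarith
    have hlognn : (0:ℝ) ≤ 1 + Real.log t := by
      have := Real.log_nonneg h1t
      linarith
    calc t ^ (-(4*(3/2:ℝ))) *
          ∫ u in tstar..t, u ^ ((3/2:ℝ)-1) * Real.exp (Cstar*u) * chiF (3/2) Cstar t u
        ≤ t ^ (-(4*(3/2:ℝ))) * ((1 + Real.log t) / Cstar^3) := by
          apply mul_le_mul_of_nonneg_left _ (Real.rpow_nonneg ht0.le _)
          calc (∫ u in tstar..t, u ^ ((3/2:ℝ)-1) * Real.exp (Cstar*u) * chiF (3/2) Cstar t u)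
              ≤ (∫ u in tstar..t, u ^ (4*(3/2:ℝ)-7)) / Cstar^3 := hchain
            _ = Real.log (t/tstar) / Cstar^3 := by rw [hrpow]
            _ ≤ (1 + Real.log t) / Cstar^3 := by gcongr
      _ = 1/Cstar^3 * (1 + Real.log t) / t ^ 6 := by
          rw [show -(4*(3/2:ℝ)) = -((6:ℕ):ℝ) by norm_num, Real.rpow_neg ht0.le,
            Real.rpow_natCast]
          ring
  · -- case 3/2 < c
    by_cases hc2 : c ≤ 2
    · -- low subcase
      refine ⟨1/(4*c-6) / Cstar^3, ?_, ?_⟩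
      · have h46 : (0:ℝ) < 4*c-6 := by linarith
        positivity
      intro t ht
      have h1t : (1:ℝ) ≤ t := le_trans htstar ht
      have ht0 : (0:ℝ) < t := lt_of_lt_of_le one_pos h1t
      refine ⟨fun _ => ?_, fun h => absurd h (by linarith), fun h => absurd h (by linarith)⟩
      rw [I8_eq]
      have hchain := chainL hC htstar ht hc2
      have hrpow : (∫ u in tstar..t, u ^ (4*c-7))
          = (t ^ (4*c-6) - tstar ^ (4*c-6)) / (4*c-6) := by
        rw [integral_rpow (Or.inl (by linarith))]
        norm_num [show 4*c-7+1 = 4*c-6 by ring]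
      have hint_le : (∫ u in tstar..t, u ^ (4*c-7)) ≤ t ^ (4*c-6) / (4*c-6) := by
        rw [hrpow]
        have h46 : (0:ℝ) < 4*c-6 := by linarith
        have := (Real.rpow_pos_of_pos (lt_of_lt_of_le one_pos htstar) (4*c-6)).le
        gcongr
        linarith
      calc t ^ (-(4*c)) * ∫ u in tstar..t, u ^ (c-1) * Real.exp (Cstar*u) * chiF c Cstar t u
          ≤ t ^ (-(4*c)) * ((t ^ (4*c-6) / (4*c-6)) / Cstar^3) := by
            apply mul_le_mul_of_nonneg_left _ (Real.rpow_nonneg ht0.le _)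
            calc (∫ u in tstar..t, u ^ (c-1) * Real.exp (Cstar*u) * chiF c Cstar t u)
                ≤ (∫ u in tstar..t, u ^ (4*c-7)) / Cstar^3 := hchain
              _ ≤ (t ^ (4*c-6) / (4*c-6)) / Cstar^3 := by gcongr
        _ = (t ^ (-(4*c)) * t ^ (4*c-6)) * (1/(4*c-6) / Cstar^3) := by ring
        _ = 1/(4*c-6) / Cstar^3 / t ^ 6 := by
            rw [tpow6 ht0]
            ring
    · -- high subcase
      push_neg at hc2
      refine ⟨1/Cstar^3, by positivity, ?_⟩
      intro t ht
      have h1t : (1:ℝ) ≤ t := le_trans htstar ht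
      have ht0 : (0:ℝ) < t := lt_of_lt_of_le one_pos h1t
      refine ⟨fun _ => ?_, fun h => absurd h (by linarith), fun h => absurd h (by linarith)⟩
      rw [I8_eq]
      have hchain := chainH hC htstar ht hc2.le
      calc t ^ (-(4*c)) * ∫ u in tstar..t, u ^ (c-1) * Real.exp (Cstar*u) * chiF c Cstar t u
          ≤ t ^ (-(4*c)) * (t ^ (4*c-6) / Cstar^3) := by
            exact mul_le_mul_of_nonneg_left hchain (Real.rpow_nonneg ht0.le _)
        _ = (t ^ (-(4*c)) * t ^ (4*c-6)) * (1 / Cstar^3) := by ring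
        _ = 1/Cstar^3 / t ^ 6 := by
            rw [tpow6 ht0]
            ring
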